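/- Let α₁, α₂, α₃ ∈ ℂ be nonzero and let ξ₁, ξ₂, ξ₃ be roots of unity with α₁ξ₁ + α₂ξ₂ + α₃ξ₃ = 0. If the field K = ℚ(α₁, α₂, α₃, ξ₁, ξ₂, ξ₃) contains no primitive cube root of unity and the ratios ξ₂/ξ₁ and ξ₃/ξ₁ lie in K, then under the hypothesis that α₁, α₂, α₃ are the conjugates of a degree-3 algebraic number α with ℚ(α) not Galois over ℚ, one has ξ₁ = ξ₂ = ξ₃ and hence α₁ + α₂ + α₃ = 0. -/

import Mathlib

open IntermediateField Polynomial

noncomputable abbrev QQ := AlgebraicClosure ℚ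

instance : Algebra.IsAlgebraic ℚ QQ := AlgebraicClosure.isAlgebraic ℚ

lemma aux_pow (g : QQ →ₐ[ℚ] QQ) (m : ℕ) (hm : 0 < m) :
    ∃ u : ℕ, ∀ z : QQ, z ^ m = 1 → g z = z ^ u := by
  haveI : NeZero m := ⟨hm.ne'⟩
  haveI : NeZero (m : QQ) := ⟨by exact_mod_cast hm.ne'⟩
  obtain ⟨ζ, hζ⟩ := HasEnoughRootsOfUnity.exists_primitiveRoot QQ m
  have hgζ : (g ζ) ^ m = 1 := by rw [← map_pow, hζ.pow_eq_one, map_one]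
  obtain ⟨u, -, hu⟩ := hζ.eq_pow_of_pow_eq_one hgζ
  refine ⟨u, fun z hz => ?_⟩
  obtain ⟨i, -, rfl⟩ := hζ.eq_pow_of_pow_eq_one hz
  rw [map_pow, ← hu, ← pow_mul, mul_comm, pow_mul]

noncomputable def Cyc : IntermediateField ℚ QQ :=
  IntermediateField.adjoin ℚ {z : QQ | ∃ m : ℕ, 0 < m ∧ z ^ m = 1}

lemma aux_comm (g h : QQ →ₐ[ℚ] QQ) {z : QQ} (hz : z ∈ Cyc) : g (h z) = h (g z) := by
  refine IntermediateField.adjoin_induction (F := ℚ) (E := QQ) (p := fun x _ => g (h x) = h (g x))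
    (fun x hx => ?_) (fun x => ?_)
    (fun x y _ _ hx hy => ?_) (fun x _ hx => ?_) (fun x y _ _ hx hy => ?_) hz
  · obtain ⟨m, hm, hxm⟩ := hx
    obtain ⟨u, hu⟩ := aux_pow g m hm
    obtain ⟨v, hv⟩ := aux_pow h m hm
    have hhx : (h x) ^ m = 1 := by rw [← map_pow, hxm, map_one]
    have hgx : (g x) ^ m = 1 := by rw [← map_pow, hxm, map_one]
    rw [hu _ hhx, hv _ hxm, hv _ hgx, hu _ hxm, ← pow_mul, ← pow_mul, mul_comm]
  · show g (h _) = h (g _)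
    rw [AlgHom.commutes, AlgHom.commutes, AlgHom.commutes]
  · show g (h _) = h (g _)
    simp only [map_add, hx, hy]
  · show g (h _) = h (g _)
    simp only [map_inv₀, hx]
  · show g (h _) = h (g _)
    simp only [map_mul, hx, hy]

lemma aux_ratio (a₁ a₂ a₃ : QQ) (h1 : a₁ ≠ 0) (h2 : a₂ ≠ 0) (h3 : a₃ ≠ 0)
    (σ τ : QQ →ₐ[ℚ] QQ)
    (hσ1 : σ a₁ = a₂) (hσ2 : σ a₂ = a₃) (hσ3 : σ a₃ = a₁)
    (hτ1 : τ a₁ = a₁) (hτ2 : τ a₂ = a₃) (hτ3 : τ a₃ = a₂)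
    (hcube : a₁ ^ 3 ≠ a₂ ^ 3)
    (x y : QQ) (hx : x ∈ Cyc) (hy : y ∈ Cyc)
    (hrel : a₂ * x + a₃ * y = 0) : x = 0 ∧ y = 0 := by
  rcases eq_or_ne x 0 with rfl | hx0
  · refine ⟨rfl, ?_⟩
    have : a₃ * y = 0 := by linear_combination hrel
    exact (mul_eq_zero.mp this).resolve_left h3
  · exfalso
    have hy0 : y ≠ 0 := by
      rintro rfl
      exact hx0 ((mul_eq_zero.mp (by linear_combination hrel)).resolve_left h2)
    have ht : a₂ / a₃ = -y / x := by
      field_simp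
      linear_combination hrel
    have htC : a₂ / a₃ ∈ Cyc := ht ▸ div_mem (neg_mem hy) hx
    have c1 := aux_comm σ τ htC
    rw [map_div₀, hτ2, hτ3, map_div₀, hσ3, hσ2, map_div₀, hσ2, hσ3, map_div₀, hτ3, hτ1] at c1
    -- c1 : a₁ / a₃ = a₂ / a₁
    have c2 := aux_comm σ (σ.comp τ) htC
    simp only [AlgHom.comp_apply] at c2
    rw [map_div₀ τ, hτ2, hτ3, map_div₀ σ, hσ3, hσ2, map_div₀ σ, hσ1, hσ3,
      map_div₀ σ, hσ2, hσ3, map_div₀ τ, hτ3, hτ1, map_div₀ σ, hσ2, hσ1] at c2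
    -- c2 : a₂ / a₁ = a₃ / a₂
    have e1 : a₁ * a₁ = a₂ * a₃ := by
      field_simp at c1
      linear_combination c1
    have e2 : a₂ * a₂ = a₁ * a₃ := by
      field_simp at c2
      linear_combination c2
    exact hcube (by linear_combination a₁ * e1 - a₂ * e2)

set_option maxHeartbeats 2000000 in
theorem stmt_13 (α α₁ α₂ α₃ ξ₁ ξ₂ ξ₃ : ℂ)
    (hα₁ : α₁ = α)
    (hint : IsIntegral ℚ α)
    (hdeg : (minpoly ℚ α).natDegree = 3)
    (hconj : ((minpoly ℚ α).aroots ℂ) = {α₁, α₂, α₃})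
    (hGal : ¬ Normal ℚ ℚ⟮α⟯)
    (hnz₁ : α₁ ≠ 0) (hnz₂ : α₂ ≠ 0) (hnz₃ : α₃ ≠ 0)
    (hξ₁ : ∃ k : ℕ, 0 < k ∧ ξ₁ ^ k = 1)
    (hξ₂ : ∃ k : ℕ, 0 < k ∧ ξ₂ ^ k = 1)
    (hξ₃ : ∃ k : ℕ, 0 < k ∧ ξ₃ ^ k = 1)
    (K : IntermediateField ℚ ℂ)
    (hK : K = IntermediateField.adjoin ℚ {α₁, α₂, α₃, ξ₁, ξ₂, ξ₃})
    (hω : ¬ ∃ ω ∈ K, ω ≠ 1 ∧ ω ^ 3 = 1)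
    (hr₂ : ξ₂ / ξ₁ ∈ K) (hr₃ : ξ₃ / ξ₁ ∈ K)
    (hsum : α₁ * ξ₁ + α₂ * ξ₂ + α₃ * ξ₃ = 0) :
    ξ₁ = ξ₂ ∧ ξ₂ = ξ₃ ∧ α₁ + α₂ + α₃ = 0 := by
  subst hα₁
  set p := minpoly ℚ α₁ with hp
  have hpirr : Irreducible p := minpoly.irreducible hint
  have hpmon : p.Monic := minpoly.monic hint
  have hpsep : p.Separable := hpirr.separable
  have hp0 : p ≠ 0 := hpmon.ne_zero
  -- distinctness of the roots in ℂ
  have hnd : ((p.aroots ℂ)).Nodup := nodup_roots (hpsep.map)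
  rw [hconj] at hnd
  simp only [Multiset.insert_eq_cons, Multiset.nodup_cons, Multiset.mem_cons,
    Multiset.mem_singleton, Multiset.nodup_singleton, and_true, not_or] at hnd
  obtain ⟨⟨h12, h13⟩, h23⟩ := hnd
  -- the embedding of the abstract algebraic closure
  let j : QQ →ₐ[ℚ] ℂ := IsAlgClosed.lift
  have jinj : Function.Injective j := j.toRingHom.injective
  have key : ∀ q : ℚ[X], (q.aroots ℂ) = (q.aroots QQ).map j := by
    intro q
    have hsp : (q.map (algebraMap ℚ QQ)).Splits := IsAlgClosed.splits _
    rw [aroots_def, aroots_def, ← j.comp_algebraMap, ← Polynomial.map_map,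
      hsp.roots_map _]
    rfl
  -- pull the roots back to QQ
  have hmem : ∀ z : ℂ, z ∈ p.aroots ℂ → ∃ a : QQ, a ∈ p.aroots QQ ∧ j a = z := by
    intro z hz
    rw [key p] at hz
    obtain ⟨a, ha, haz⟩ := Multiset.mem_map.mp hz
    exact ⟨a, ha, haz⟩
  obtain ⟨a₁, ha₁, hja₁⟩ := hmem α₁ (by rw [hconj]; simp)
  obtain ⟨a₂, ha₂, hja₂⟩ := hmem α₂ (by rw [hconj]; simp)
  obtain ⟨a₃, ha₃, hja₃⟩ := hmem α₃ (by rw [hconj]; simp)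
  have haroots : p.aroots QQ = {a₁, a₂, a₃} := by
    apply Multiset.map_injective jinj
    rw [← key p, hconj]
    simp [hja₁, hja₂, hja₃]
  have ha12 : a₁ ≠ a₂ := fun h => h12 (by rw [← hja₁, ← hja₂, h])
  have ha13 : a₁ ≠ a₃ := fun h => h13 (by rw [← hja₁, ← hja₃, h])
  have ha23 : a₂ ≠ a₃ := fun h => h23 (by rw [← hja₂, ← hja₃, h])
  have haz₁ : a₁ ≠ 0 := fun h => hnz₁ (by rw [← hja₁, h, map_zero])
  have haz₂ : a₂ ≠ 0 := fun h => hnz₂ (by rw [← hja₂, h, map_zero])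
  have haz₃ : a₃ ≠ 0 := fun h => hnz₃ (by rw [← hja₃, h, map_zero])
  -- roots of unity set-up
  obtain ⟨k₁, hk₁, hξk₁⟩ := hξ₁
  obtain ⟨k₂, hk₂, hξk₂⟩ := hξ₂
  obtain ⟨k₃, hk₃, hξk₃⟩ := hξ₃
  have hxz₁ : ξ₁ ≠ 0 := by
    intro h; rw [h, zero_pow hk₁.ne'] at hξk₁; exact zero_ne_one hξk₁
  set N := k₁ * (k₂ * k₃) with hNdef
  have hN : 0 < N := by positivity
  have hξ₁N : ξ₁ ^ N = 1 := by rw [hNdef, pow_mul, hξk₁, one_pow]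
  have hξ₂N : ξ₂ ^ N = 1 := by
    rw [hNdef, show k₁ * (k₂ * k₃) = k₂ * (k₁ * k₃) by ring, pow_mul, hξk₂, one_pow]
  have hξ₃N : ξ₃ ^ N = 1 := by
    rw [hNdef, show k₁ * (k₂ * k₃) = k₃ * (k₁ * k₂) by ring, pow_mul, hξk₃, one_pow]
  set η₂ := ξ₂ / ξ₁ with hη₂def
  set η₃ := ξ₃ / ξ₁ with hη₃def
  have hη₂N : η₂ ^ N = 1 := by rw [hη₂def, div_pow, hξ₂N, hξ₁N, one_div_one]
  have hη₃N : η₃ ^ N = 1 := by rw [hη₃def, div_pow, hξ₃N, hξ₁N, one_div_one]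
  -- pull back the roots of unity
  have hqel : ∀ z : ℂ, z ^ N = 1 → ∃ e : QQ, e ^ N = 1 ∧ j e = z := by
    intro z hz
    have hq0 : (X ^ N - 1 : ℚ[X]) ≠ 0 := by
      intro h
      have := congrArg (fun q => Polynomial.eval 0 q) h
      simp [zero_pow hN.ne'] at this
    have hzr : z ∈ (X ^ N - 1 : ℚ[X]).aroots ℂ := by
      rw [mem_aroots]
      exact ⟨hq0, by simp [hz]⟩
    rw [key _] at hzr
    obtain ⟨e, he, hez⟩ := Multiset.mem_map.mp hzr
    rw [mem_aroots] at he
    refine ⟨e, ?_, hez⟩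
    have := he.2
    simpa [sub_eq_zero] using this
  obtain ⟨e₂, he₂N, hje₂⟩ := hqel η₂ hη₂N
  obtain ⟨e₃, he₃N, hje₃⟩ := hqel η₃ hη₃N
  -- the relation in QQ
  have hrelC : α₁ + α₂ * η₂ + α₃ * η₃ = 0 := by
    rw [hη₂def, hη₃def]
    field_simp
    linear_combination hsum
  have hrel : a₁ + a₂ * e₂ + a₃ * e₃ = 0 := by
    apply jinj
    rw [map_add, map_add, map_mul, map_mul, map_zero, hja₁, hja₂, hja₃, hje₂, hje₃]
    exact hrelC
  -- membership in K
  have hαK₁ : α₁ ∈ K := by rw [hK]; exact subset_adjoin ℚ _ (by simp)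
  have hαK₂ : α₂ ∈ K := by rw [hK]; exact subset_adjoin ℚ _ (by simp)
  have hαK₃ : α₃ ∈ K := by rw [hK]; exact subset_adjoin ℚ _ (by simp)
  push_neg at hω
  have NC3 : ∀ z ∈ K, z ^ 3 = 1 → z = 1 := by
    intro z hzK hz3
    by_contra hne
    exact hω z hzK hne hz3
  -- no cube root of unity from ratios of roots
  have hcube : a₁ ^ 3 ≠ a₂ ^ 3 := by
    intro h
    have hpow : α₁ ^ 3 = α₂ ^ 3 := by
      rw [← hja₁, ← hja₂, ← map_pow, ← map_pow, h]
    have hw : (α₁ / α₂) ^ 3 = 1 := by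
      rw [div_pow, hpow, div_self (pow_ne_zero _ hnz₂)]
    have := NC3 _ (div_mem hαK₁ hαK₂) hw
    rw [div_eq_one_iff_eq hnz₂] at this
    exact h12 this
  -- core lemma: if a₂, a₃ ∈ ℚ⟮a₁⟯ then ℚ⟮α₁⟯ is normal, contradiction
  have hcore : a₂ ∈ ℚ⟮a₁⟯ → a₃ ∈ ℚ⟮a₁⟯ → False := by
    intro h2' h3'
    have hmap : (IntermediateField.adjoin ℚ {a₁}).map j = ℚ⟮α₁⟯ := by
      rw [IntermediateField.adjoin_map]
      congr 1
      rw [Set.image_singleton, hja₁]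
    have hm2 : α₂ ∈ ℚ⟮α₁⟯ := by
      rw [← hmap]
      exact ⟨a₂, h2', hja₂⟩
    have hm3 : α₃ ∈ ℚ⟮α₁⟯ := by
      rw [← hmap]
      exact ⟨a₃, h3', hja₃⟩
    have heq : IntermediateField.adjoin ℚ (p.rootSet ℂ) = ℚ⟮α₁⟯ := by
      apply le_antisymm
      · rw [IntermediateField.adjoin_le_iff]
        intro z hz
        rw [Polynomial.mem_rootSet] at hz
        have : z ∈ p.aroots ℂ := by
          rw [mem_aroots]; exact ⟨hz.1, hz.2⟩
        rw [hconj] at this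
        simp only [Multiset.insert_eq_cons, Multiset.mem_cons, Multiset.mem_singleton] at this
        rcases this with rfl | rfl | rfl
        · exact mem_adjoin_simple_self ℚ z
        · exact hm2
        · exact hm3
      · rw [IntermediateField.adjoin_le_iff]
        intro z hz
        rw [Set.mem_singleton_iff] at hz
        rw [hz]
        apply subset_adjoin
        rw [Polynomial.mem_rootSet]
        exact ⟨hp0, minpoly.aeval ℚ α₁⟩
    haveI hsf : IsSplittingField ℚ (IntermediateField.adjoin ℚ (p.rootSet ℂ)) p :=
      adjoin_rootSet_isSplittingField (IsAlgClosed.splits _)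
    have hnormal : Normal ℚ (IntermediateField.adjoin ℚ (p.rootSet ℂ)) :=
      Normal.of_isSplittingField p
    rw [heq] at hnormal
    exact hGal hnormal
  -- Fact: a₂ ∉ ℚ⟮a₁⟯
  have hsum3 : a₁ + a₂ + a₃ = algebraMap ℚ QQ (-p.nextCoeff) := by
    have hsplit : (p.map (algebraMap ℚ QQ)).Splits :=
      IsAlgClosed.splits _
    have := hsplit.nextCoeff_eq_neg_sum_roots_of_monic
      (hpmon.map (algebraMap ℚ QQ))
    rw [show (p.map (algebraMap ℚ QQ)).roots = p.aroots QQ from rfl, haroots,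
      Polynomial.nextCoeff_map (algebraMap ℚ QQ).injective] at this
    simp only [Multiset.insert_eq_cons, Multiset.sum_cons, Multiset.sum_singleton] at this
    rw [map_neg]
    linear_combination this
  have hN1 : a₂ ∉ ℚ⟮a₁⟯ := by
    intro h2'
    apply hcore h2'
    have : a₃ = algebraMap ℚ QQ (-p.nextCoeff) - a₁ - a₂ := by
      linear_combination hsum3
    rw [this]
    exact sub_mem (sub_mem (IntermediateField.algebraMap_mem _ _) (mem_adjoin_simple_self ℚ a₁)) h2'
  -- the quadratic minimal polynomial of a₂ over ℚ⟮a₁⟯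
  have hintQQ : ∀ z : QQ, IsIntegral ℚ z := fun z =>
    IsAlgebraic.isIntegral (Algebra.IsAlgebraic.isAlgebraic z)
  haveI : CharZero (ℚ⟮a₁⟯) := charZero_of_injective_algebraMap (algebraMap ℚ (ℚ⟮a₁⟯)).injective
  have int2 : IsIntegral (ℚ⟮a₁⟯) a₂ := (hintQQ a₂).tower_top
  set q := minpoly (ℚ⟮a₁⟯) a₂ with hq
  have hqirr : Irreducible q := minpoly.irreducible int2
  have hqmon : q.Monic := minpoly.monic int2
  have hq0 : q ≠ 0 := hqmon.ne_zero
  have hqsep : q.Separable := hqirr.separable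
  set a₁' : ℚ⟮a₁⟯ := ⟨a₁, mem_adjoin_simple_self ℚ a₁⟩ with ha₁'def
  have ha₁'map : algebraMap (ℚ⟮a₁⟯) QQ a₁' = a₁ := rfl
  have hdvd : q ∣ p.map (algebraMap ℚ (ℚ⟮a₁⟯)) :=
    minpoly.dvd _ _ (by rw [aeval_map_algebraMap]; exact (mem_aroots.mp ha₂).2)
  have hpmap0 : p.map (algebraMap ℚ (ℚ⟮a₁⟯)) ≠ 0 := (hpmon.map _).ne_zero
  have hpdeg' : (p.map (algebraMap ℚ (ℚ⟮a₁⟯))).natDegree = 3 := by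
    rw [natDegree_map]; exact hdeg
  have hqroot_ne : 2 ≤ q.natDegree → q.eval a₁' ≠ 0 := by
    intro h2 hev
    obtain ⟨c, hc⟩ := dvd_iff_isRoot.mpr hev
    rcases hqirr.isUnit_or_isUnit hc with h | h
    · exact (Polynomial.not_isUnit_X_sub_C a₁') h
    · have hdc : c.natDegree = 0 := natDegree_eq_zero_of_isUnit h
      have hcc : c ≠ 0 := fun hcc => hq0 (by rw [hc, hcc, mul_zero])
      have : q.natDegree = 1 := by
        rw [hc, natDegree_mul (X_sub_C_ne_zero a₁') hcc, hdc, natDegree_X_sub_C]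
      omega
  -- the element a₁' is a root of p over ℚ⟮a₁⟯
  have hpa₁' : (p.map (algebraMap ℚ (ℚ⟮a₁⟯))).eval a₁' = 0 := by
    apply (algebraMap (ℚ⟮a₁⟯) QQ).injective
    rw [map_zero, Polynomial.eval_map, Polynomial.hom_eval₂, ← IsScalarTower.algebraMap_eq,
      ha₁'map]
    exact (mem_aroots.mp ha₁).2
  have hqdeg : q.natDegree = 2 := by
    have hle3 : q.natDegree ≤ 3 := hpdeg' ▸ Polynomial.natDegree_le_of_dvd hdvd hpmap0
    have hge1 : 0 < q.natDegree := minpoly.natDegree_pos int2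
    have hne1 : q.natDegree ≠ 1 := by
      intro h1
      apply hN1
      have := minpoly.mem_range_of_degree_eq_one (ℚ⟮a₁⟯) a₂
        (by rw [← hq, degree_eq_natDegree hq0, h1]; rfl)
      obtain ⟨w, hw⟩ := this
      rw [← hw]
      exact w.2
    have hne3 : q.natDegree ≠ 3 := by
      intro h3
      obtain ⟨c, hc⟩ := hdvd
      have hcc : c ≠ 0 := fun hcc => hpmap0 (by rw [hc, hcc, mul_zero])
      have hdc : c.natDegree = 0 := by
        have := hpdeg'
        rw [hc, natDegree_mul hq0 hcc, h3] at this
        omega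
      have hceval : c.eval a₁' ≠ 0 := by
        obtain ⟨cc, rfl⟩ := natDegree_eq_zero.mp hdc
        simpa using fun hc0 => hcc (by rw [hc0, map_zero])
      have : q.eval a₁' = 0 := by
        have := hpa₁'
        rw [hc, eval_mul] at this
        exact (mul_eq_zero.mp this).resolve_right hceval
      exact hqroot_ne (by omega) this
    omega
  -- the roots of q in QQ are a₂ and a₃
  have hqsplit : (q.map (algebraMap (ℚ⟮a₁⟯) QQ)).Splits := IsAlgClosed.splits _
  have hcard : (q.aroots QQ).card = 2 := by
    rw [aroots_def, ← hqsplit.natDegree_eq_card_roots, natDegree_map]; exact hqdeg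
  have hnodq : (q.aroots QQ).Nodup := nodup_roots hqsep.map
  have ha₂q : a₂ ∈ q.aroots QQ := by
    rw [mem_aroots]; exact ⟨hq0, minpoly.aeval _ _⟩
  obtain ⟨s, hs⟩ := Multiset.exists_cons_of_mem ha₂q
  have hscard : s.card = 1 := by
    have := hcard
    rw [hs, Multiset.card_cons] at this
    omega
  obtain ⟨r, hr⟩ := Multiset.card_eq_one.mp hscard
  subst hr
  have hrroot : r ∈ q.aroots QQ := by rw [hs]; simp
  have hrne2 : r ≠ a₂ := by
    rw [hs, Multiset.nodup_cons] at hnodq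
    intro h
    exact hnodq.1 (h ▸ Multiset.mem_singleton_self r)
  have hra : r = a₃ := by
    have hrp : r ∈ p.aroots QQ := by
      rw [mem_aroots]
      refine ⟨hp0, ?_⟩
      have h1 : aeval r q = 0 := (mem_aroots'.mp hrroot).2
      obtain ⟨c, hc⟩ := hdvd
      have : aeval r (p.map (algebraMap ℚ (ℚ⟮a₁⟯))) = 0 := by
        rw [hc, map_mul, h1, zero_mul]
      rwa [aeval_map_algebraMap] at this
    rw [haroots] at hrp
    simp only [Multiset.insert_eq_cons, Multiset.mem_cons, Multiset.mem_singleton] at hrp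
    rcases hrp with h | h | h
    · exfalso
      apply hqroot_ne (by omega)
      have h1 : aeval r q = 0 := (mem_aroots'.mp hrroot).2
      rw [h] at h1
      have h3 : aeval (algebraMap (ℚ⟮a₁⟯) QQ a₁') q = 0 := by rw [ha₁'map]; exact h1
      rw [Polynomial.aeval_algebraMap_apply_eq_algebraMap_eval] at h3
      exact (algebraMap (ℚ⟮a₁⟯) QQ).injective (by rw [h3, map_zero])
    · exact absurd h hrne2
    · exact h
  have ha₃q : aeval a₃ q = 0 := hra ▸ (mem_aroots'.mp hrroot).2
  -- construct τ (fixes ℚ⟮a₁⟯, swaps a₂ and a₃)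
  have hsplits' : ∀ s : QQ, IsIntegral (ℚ⟮a₁⟯) s ∧
      ((minpoly (ℚ⟮a₁⟯) s).map (algebraMap (ℚ⟮a₁⟯) QQ)).Splits := fun s =>
    ⟨(hintQQ s).tower_top, IsAlgClosed.splits _⟩
  obtain ⟨φ, hφ⟩ := IntermediateField.exists_algHom_of_splits_of_aeval hsplits' ha₃q
  set τ : QQ →ₐ[ℚ] QQ := φ.restrictScalars ℚ with hτdef
  have hτ2 : τ a₂ = a₃ := hφ
  have hτ1 : τ a₁ = a₁ := by
    have := φ.commutes a₁'
    rwa [ha₁'map] at this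
  have τinj : Function.Injective τ := τ.toRingHom.injective
  have hτ3 : τ a₃ = a₂ := by
    have hroot : aeval (φ a₃) q = 0 := by
      rw [Polynomial.aeval_algHom_apply, ha₃q, map_zero]
    have : φ a₃ ∈ q.aroots QQ := mem_aroots.mpr ⟨hq0, hroot⟩
    rw [hs] at this
    simp only [Multiset.mem_cons, Multiset.mem_singleton] at this
    rcases this with h | h
    · exact h
    · exfalso
      rw [hra] at h
      have : τ a₃ = τ a₂ := by rw [hτ2]; exact h
      exact ha23 (τinj this).symm
  -- construct ψ and then the 3-cycle σ
  have hminp₁ : minpoly ℚ a₁ = p :=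
    (minpoly.eq_of_irreducible_of_monic hpirr (mem_aroots.mp ha₁).2 hpmon).symm
  have hsplitsQ : ∀ s : QQ, IsIntegral ℚ s ∧ ((minpoly ℚ s).map (algebraMap ℚ QQ)).Splits :=
    fun s => ⟨hintQQ s, IsAlgClosed.splits _⟩
  obtain ⟨ψ, hψ1⟩ := IntermediateField.exists_algHom_of_splits_of_aeval hsplitsQ
    (show aeval a₂ (minpoly ℚ a₁) = 0 by rw [hminp₁]; exact (mem_aroots.mp ha₂).2)
  have ψinj : Function.Injective ψ := ψ.toRingHom.injective
  have hψperm : ∀ z : QQ, aeval z p = 0 → (ψ z = a₁ ∨ ψ z = a₂ ∨ ψ z = a₃) := by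
    intro z hz
    have : ψ z ∈ p.aroots QQ := by
      rw [mem_aroots]
      exact ⟨hp0, by rw [Polynomial.aeval_algHom_apply, hz, map_zero]⟩
    rw [haroots] at this
    simpa only [Multiset.insert_eq_cons, Multiset.mem_cons, Multiset.mem_singleton] using this
  have hψ2cases : ψ a₂ = a₁ ∨ ψ a₂ = a₃ := by
    rcases hψperm a₂ (mem_aroots.mp ha₂).2 with h | h | h
    · exact Or.inl h
    · exact absurd (ψinj (hψ1.trans h.symm)) ha12
    · exact Or.inr h
  have hσex : ∃ σ : QQ →ₐ[ℚ] QQ, σ a₁ = a₂ ∧ σ a₂ = a₃ ∧ σ a₃ = a₁ := by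
    rcases hψ2cases with h | h
    · have hψ3 : ψ a₃ = a₃ := by
        rcases hψperm a₃ (mem_aroots.mp ha₃).2 with h3 | h3 | h3
        · exact absurd (ψinj (h.trans h3.symm)) ha23
        · exact absurd (ψinj (hψ1.trans h3.symm)) ha13
        · exact h3
      refine ⟨ψ.comp τ, ?_, ?_, ?_⟩
      · rw [AlgHom.comp_apply, hτ1, hψ1]
      · rw [AlgHom.comp_apply, hτ2, hψ3]
      · rw [AlgHom.comp_apply, hτ3, h]
    · have hψ3 : ψ a₃ = a₁ := by
        rcases hψperm a₃ (mem_aroots.mp ha₃).2 with h3 | h3 | h3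
        · exact h3
        · exact absurd (ψinj (hψ1.trans h3.symm)) ha13
        · exact absurd (ψinj (h.trans h3.symm)) ha23
      exact ⟨ψ, hψ1, h, hψ3⟩
  obtain ⟨σ, hσ1, hσ2, hσ3⟩ := hσex
  -- power action of σ and τ on N-th roots of unity
  obtain ⟨u, hu⟩ := aux_pow σ N hN
  obtain ⟨v, hv⟩ := aux_pow τ N hN
  have he₂C : e₂ ∈ Cyc := subset_adjoin ℚ _ ⟨N, hN, he₂N⟩
  have he₃C : e₃ ∈ Cyc := subset_adjoin ℚ _ ⟨N, hN, he₃N⟩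
  -- apply σ to the relation
  have hrel2 : a₂ + a₃ * e₂ ^ u + a₁ * e₃ ^ u = 0 := by
    have := congrArg σ hrel
    rw [map_add, map_add, map_mul, map_mul, map_zero, hσ1, hσ2, hσ3,
      hu e₂ he₂N, hu e₃ he₃N] at this
    linear_combination this
  have hrel3 : a₁ + a₃ * e₂ ^ v + a₂ * e₃ ^ v = 0 := by
    have := congrArg τ hrel
    rw [map_add, map_add, map_mul, map_mul, map_zero, hτ1, hτ2, hτ3,
      hv e₂ he₂N, hv e₃ he₃N] at this
    linear_combination this
  -- first application of the ratio lemma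
  have hxy1 := aux_ratio a₁ a₂ a₃ haz₁ haz₂ haz₃ σ τ hσ1 hσ2 hσ3 hτ1 hτ2 hτ3 hcube
    (1 - e₂ * e₃ ^ u) (e₂ ^ u - e₃ * e₃ ^ u)
    (sub_mem (one_mem _) (mul_mem he₂C (pow_mem he₃C u)))
    (sub_mem (pow_mem he₂C u) (mul_mem he₃C (pow_mem he₃C u)))
    (by linear_combination hrel2 - e₃ ^ u * hrel)
  have hE1 : e₂ * e₃ ^ u = 1 := by have := hxy1.1; linear_combination -this
  have hE2 : e₂ ^ u = e₃ * e₃ ^ u := by have := hxy1.2; linear_combination this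
  -- second application of the ratio lemma
  have hxy2 := aux_ratio a₁ a₂ a₃ haz₁ haz₂ haz₃ σ τ hσ1 hσ2 hσ3 hτ1 hτ2 hτ3 hcube
    (e₂ - e₃ ^ v) (e₃ - e₂ ^ v)
    (sub_mem he₂C (pow_mem he₃C v))
    (sub_mem he₃C (pow_mem he₂C v))
    (by linear_combination hrel - hrel3)
  have hE3 : e₂ = e₃ ^ v := by have := hxy2.1; linear_combination this
  have hE4 : e₃ = e₂ ^ v := by have := hxy2.2; linear_combination this
  -- move to the unit group and use order arithmetic
  have he₂0 : e₂ ≠ 0 := fun h => by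
    rw [h, zero_pow hN.ne'] at he₂N; exact zero_ne_one he₂N
  have hU : IsUnit e₂ := isUnit_iff_ne_zero.mpr he₂0
  have hεcoe : (hU.unit : QQ) = e₂ := hU.unit_spec
  have hA : hU.unit ^ (v * v) = hU.unit ^ 1 := by
    apply Units.ext
    simp only [Units.val_pow_eq_pow_val, hεcoe, pow_one]
    rw [pow_mul, ← hE4, ← hE3]
  have hB : hU.unit ^ (v * u + 1) = 1 := by
    apply Units.ext
    simp only [Units.val_pow_eq_pow_val, hεcoe, Units.val_one]
    rw [← hE1, hE4]
    ring
  have hC : hU.unit ^ u = hU.unit ^ (v * (u + 1)) := by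
    apply Units.ext
    simp only [Units.val_pow_eq_pow_val, hεcoe]
    rw [hE2, hE4]
    ring
  have modA := pow_eq_pow_iff_modEq.mp hA
  have modB := orderOf_dvd_of_pow_eq_one hB
  have modC := pow_eq_pow_iff_modEq.mp hC
  obtain ⟨x₁, hx₁⟩ := modA.dvd
  obtain ⟨x₂, hx₂⟩ := modB
  obtain ⟨x₃, hx₃⟩ := modC.dvd
  push_cast at hx₁ hx₃
  have hx₂' : ((v : ℤ) * u + 1) = (orderOf hU.unit : ℤ) * x₂ := by exact_mod_cast hx₂
  have hd3 : (orderOf hU.unit : ℤ) ∣ 3 := by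
    refine ⟨((v:ℤ)+1)*x₁ + ((v:ℤ)+2)*(1-(v:ℤ))*x₂ + (v:ℤ)*((v:ℤ)+2)*x₃, ?_⟩
    linear_combination (((v:ℤ)+1)) * hx₁ + (((v:ℤ)+2)*(1-(v:ℤ))) * hx₂' +
      ((v:ℤ)*((v:ℤ)+2)) * hx₃
  have hd3' : orderOf hU.unit ∣ 3 := by exact_mod_cast hd3
  have hε3 : hU.unit ^ 3 = 1 := orderOf_dvd_iff_pow_eq_one.mp hd3'
  have he₂3 : e₂ ^ 3 = 1 := by
    have := congrArg (Units.val) hε3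
    simpa [hεcoe] using this
  have hη₂3 : η₂ ^ 3 = 1 := by rw [← hje₂, ← map_pow, he₂3, map_one]
  have hη₂1 : η₂ = 1 := NC3 _ hr₂ hη₂3
  have he₂1 : e₂ = 1 := by apply jinj; rw [hje₂, map_one]; exact hη₂1
  have he₃1 : e₃ = 1 := by rw [hE4, he₂1, one_pow]
  have hη₃1 : η₃ = 1 := by rw [← hje₃, he₃1, map_one]
  have hξ21 : ξ₂ = ξ₁ := by
    rw [hη₂def, div_eq_one_iff_eq hxz₁] at hη₂1
    exact hη₂1
  have hξ31 : ξ₃ = ξ₁ := by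
    rw [hη₃def, div_eq_one_iff_eq hxz₁] at hη₃1
    exact hη₃1
  refine ⟨hξ21.symm, by rw [hξ21, hξ31], ?_⟩
  rw [hξ21, hξ31] at hsum
  have hfin : (α₁ + α₂ + α₃) * ξ₁ = 0 := by linear_combination hsum
  exact (mul_eq_zero.mp hfin).resolve_right hxz₁
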